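/- On ℂ² ∖ {0} with coordinates (z₁, z₂) and |z|² = |z₁|² + |z₂|², let θᵇ = (1/(2|z|²))·[[A, 2B],[-2conj(B), -A]], where A = z₁ d z̄₁ + z̄₂ dz₂ - z₂ d z̄₂ - z̄₁ dz₁ and B = z₂ d z̄₁ - z̄₁ dz₂ are complex-valued 1-forms. Then the curvature 2-form Θᵇ = dθᵇ - θᵇ ∧ θᵇ vanishes identically. -/

import Mathlib

open Complex

namespace BismutFlatHopf

/-- Exterior derivative of a (real-smooth) complex-valued `1`-form on `ℂ²`,
viewed as a function of the point and a tangent vector: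
`dω(p)(u,v) = (D_u ω(·)(v) - D_v ω(·)(u))(p)`. -/
noncomputable def extD (ω : ℂ × ℂ → ℂ × ℂ → ℂ) (p u v : ℂ × ℂ) : ℂ :=
  fderiv ℝ (fun q => ω q v) p u - fderiv ℝ (fun q => ω q u) p v

/-- Wedge product of two `1`-forms. -/
def wedge (a b : ℂ × ℂ → ℂ × ℂ → ℂ) (p u v : ℂ × ℂ) : ℂ :=
  a p u * b p v - a p v * b p u

/-- The `1`-form `A = z₁ dz̄₁ + z̄₂ dz₂ - z₂ dz̄₂ - z̄₁ dz₁`. -/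
def Aform (p u : ℂ × ℂ) : ℂ :=
  p.1 * (starRingEnd ℂ) u.1 + (starRingEnd ℂ) p.2 * u.2
    - p.2 * (starRingEnd ℂ) u.2 - (starRingEnd ℂ) p.1 * u.1

/-- The `1`-form `B = z₂ dz̄₁ - z̄₁ dz₂`. -/
def Bform (p u : ℂ × ℂ) : ℂ :=
  p.2 * (starRingEnd ℂ) u.1 - (starRingEnd ℂ) p.1 * u.2

/-- The Bismut connection matrix `θᵇ = (1/(2|z|²))·[[A, 2B],[-2B̄, -A]]` of the
standard Hopf metric on `ℂ² ∖ {0}`, as a matrix of `1`-forms. -/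
noncomputable def θb (i j : Fin 2) (p u : ℂ × ℂ) : ℂ :=
  ((2 * (normSq p.1 + normSq p.2) : ℝ) : ℂ)⁻¹ *
    (!![Aform p u, 2 * Bform p u;
        -2 * (starRingEnd ℂ) (Bform p u), -Aform p u] i j)

/-! ### Auxiliary machinery -/

noncomputable def linCLM (a b c d : ℂ) : (ℂ × ℂ) →L[ℝ] ℂ :=
  a • ContinuousLinearMap.fst ℝ ℂ ℂ
  + b • (Complex.conjCLE.toContinuousLinearMap.comp (ContinuousLinearMap.fst ℝ ℂ ℂ))
  + c • ContinuousLinearMap.snd ℝ ℂ ℂ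
  + d • (Complex.conjCLE.toContinuousLinearMap.comp (ContinuousLinearMap.snd ℝ ℂ ℂ))

lemma linCLM_apply (a b c d : ℂ) (u : ℂ × ℂ) :
    linCLM a b c d u = a * u.1 + b * (starRingEnd ℂ) u.1 + c * u.2 + d * (starRingEnd ℂ) u.2 := by
  simp [linCLM, smul_eq_mul]

lemma hasFDerivAt_conjFst (p : ℂ × ℂ) : HasFDerivAt (fun q : ℂ × ℂ => (starRingEnd ℂ) q.1)
    (Complex.conjCLE.toContinuousLinearMap.comp (ContinuousLinearMap.fst ℝ ℂ ℂ)) p :=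
  (Complex.conjCLE.toContinuousLinearMap.comp (ContinuousLinearMap.fst ℝ ℂ ℂ)).hasFDerivAt

lemma hasFDerivAt_conjSnd (p : ℂ × ℂ) : HasFDerivAt (fun q : ℂ × ℂ => (starRingEnd ℂ) q.2)
    (Complex.conjCLE.toContinuousLinearMap.comp (ContinuousLinearMap.snd ℝ ℂ ℂ)) p :=
  (Complex.conjCLE.toContinuousLinearMap.comp (ContinuousLinearMap.snd ℝ ℂ ℂ)).hasFDerivAt

lemma hasFDerivAt_lin (a b c d : ℂ) (p : ℂ × ℂ) :
    HasFDerivAt (fun q : ℂ × ℂ =>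
        a * q.1 + b * (starRingEnd ℂ) q.1 + c * q.2 + d * (starRingEnd ℂ) q.2)
      (linCLM a b c d) p := by
  have h : (fun q : ℂ × ℂ =>
      a * q.1 + b * (starRingEnd ℂ) q.1 + c * q.2 + d * (starRingEnd ℂ) q.2)
      = ⇑(linCLM a b c d) := by
    funext q; rw [linCLM_apply]
  rw [h]
  exact (linCLM a b c d).hasFDerivAt

lemma fderiv_key (a b c d : ℂ) (p u : ℂ × ℂ)
    (hp : 2 * (p.1 * (starRingEnd ℂ) p.1 + p.2 * (starRingEnd ℂ) p.2) ≠ 0) :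
    fderiv ℝ (fun q : ℂ × ℂ =>
        (2 * (q.1 * (starRingEnd ℂ) q.1 + q.2 * (starRingEnd ℂ) q.2))⁻¹ *
          (a * q.1 + b * (starRingEnd ℂ) q.1 + c * q.2 + d * (starRingEnd ℂ) q.2)) p u
    = -((2 * (p.1 * (starRingEnd ℂ) p.1 + p.2 * (starRingEnd ℂ) p.2)) ^ 2)⁻¹ *
          (2 * (p.1 * (starRingEnd ℂ) u.1 + (starRingEnd ℂ) p.1 * u.1
             + p.2 * (starRingEnd ℂ) u.2 + (starRingEnd ℂ) p.2 * u.2)) *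
          (a * p.1 + b * (starRingEnd ℂ) p.1 + c * p.2 + d * (starRingEnd ℂ) p.2)
      + (2 * (p.1 * (starRingEnd ℂ) p.1 + p.2 * (starRingEnd ℂ) p.2))⁻¹ *
          (a * u.1 + b * (starRingEnd ℂ) u.1 + c * u.2 + d * (starRingEnd ℂ) u.2) := by
  have hn : HasFDerivAt (fun q : ℂ × ℂ =>
      2 * (q.1 * (starRingEnd ℂ) q.1 + q.2 * (starRingEnd ℂ) q.2))
      ((2 : ℂ) • ((p.1 • (Complex.conjCLE.toContinuousLinearMap.comp (ContinuousLinearMap.fst ℝ ℂ ℂ))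
          + (starRingEnd ℂ) p.1 • (ContinuousLinearMap.fst ℝ ℂ ℂ))
        + (p.2 • (Complex.conjCLE.toContinuousLinearMap.comp (ContinuousLinearMap.snd ℝ ℂ ℂ))
          + (starRingEnd ℂ) p.2 • (ContinuousLinearMap.snd ℝ ℂ ℂ)))) p :=
    (((hasFDerivAt_fst.mul (hasFDerivAt_conjFst p)).add
      (hasFDerivAt_snd.mul (hasFDerivAt_conjSnd p))).const_mul 2)
  have hinv : HasFDerivAt (fun q : ℂ × ℂ =>
      (2 * (q.1 * (starRingEnd ℂ) q.1 + q.2 * (starRingEnd ℂ) q.2))⁻¹) _ p :=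
    (hasFDerivAt_inv' (𝕜 := ℝ) hp).comp p hn
  have h : HasFDerivAt (fun q : ℂ × ℂ =>
      (2 * (q.1 * (starRingEnd ℂ) q.1 + q.2 * (starRingEnd ℂ) q.2))⁻¹ *
        (a * q.1 + b * (starRingEnd ℂ) q.1 + c * q.2 + d * (starRingEnd ℂ) q.2)) _ p :=
    hinv.mul (hasFDerivAt_lin a b c d p)
  rw [h.fderiv]
  simp only [ContinuousLinearMap.add_apply, ContinuousLinearMap.smul_apply,
    ContinuousLinearMap.coe_smul', Pi.smul_apply, ContinuousLinearMap.comp_apply,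
    ContinuousLinearMap.coe_fst', ContinuousLinearMap.coe_snd',
    ContinuousLinearEquiv.coe_coe, Complex.conjCLE_apply, linCLM_apply,
    smul_eq_mul, ContinuousLinearMap.neg_apply,
    ContinuousLinearMap.mulLeftRight_apply]
  field_simp
  ring

/-- Coefficient matrices: `θb i j q v = s(q)⁻¹ * (cA*q₁ + cB*q̄₁ + cC*q₂ + cD*q̄₂)`. -/
def cA (i j : Fin 2) (v : ℂ × ℂ) : ℂ :=
  !![(starRingEnd ℂ) v.1, 0; 2 * (starRingEnd ℂ) v.2, -(starRingEnd ℂ) v.1] i j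
def cB (i j : Fin 2) (v : ℂ × ℂ) : ℂ :=
  !![-v.1, -2 * v.2; 0, v.1] i j
def cC (i j : Fin 2) (v : ℂ × ℂ) : ℂ :=
  !![-(starRingEnd ℂ) v.2, 2 * (starRingEnd ℂ) v.1; 0, (starRingEnd ℂ) v.2] i j
def cD (i j : Fin 2) (v : ℂ × ℂ) : ℂ :=
  !![v.2, 0; -2 * v.1, -v.2] i j

lemma cast_s (q : ℂ × ℂ) :
    ((2 * (normSq q.1 + normSq q.2) : ℝ) : ℂ)
      = 2 * (q.1 * (starRingEnd ℂ) q.1 + q.2 * (starRingEnd ℂ) q.2) := by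
  rw [Complex.mul_conj, Complex.mul_conj]
  push_cast
  ring

lemma theta_fun_eq (i j : Fin 2) (v : ℂ × ℂ) :
    (fun q => θb i j q v) = fun q : ℂ × ℂ =>
      (2 * (q.1 * (starRingEnd ℂ) q.1 + q.2 * (starRingEnd ℂ) q.2))⁻¹ *
        (cA i j v * q.1 + cB i j v * (starRingEnd ℂ) q.1
          + cC i j v * q.2 + cD i j v * (starRingEnd ℂ) q.2) := by
  funext q
  fin_cases i <;> fin_cases j <;>
    simp only [θb, Aform, Bform, cA, cB, cC, cD, map_sub, map_mul, Complex.conj_conj,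
      Matrix.of_apply, Matrix.cons_val', Matrix.cons_val_zero, Matrix.cons_val_one, Matrix.head_cons,
      Matrix.empty_val', Matrix.cons_val_fin_one, Matrix.head_fin_const,
      Fin.isValue, Fin.zero_eta, Fin.mk_one] <;>
    rw [cast_s] <;> ring

set_option maxHeartbeats 2000000 in
/-- The curvature `Θᵇ = dθᵇ - θᵇ ∧ θᵇ` of the Bismut connection of the standard
Hopf metric on `ℂ² ∖ {0}` vanishes identically. -/
theorem bismut_curvature_of_hopf_metric_vanishes :
    ∀ p : ℂ × ℂ, p ≠ 0 → ∀ (i j : Fin 2) (u v : ℂ × ℂ),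
      extD (θb i j) p u v - ∑ k : Fin 2, wedge (θb i k) (θb k j) p u v = 0 := by
  intro p hp i j u v
  have hpos : 0 < normSq p.1 + normSq p.2 := by
    by_cases h1 : p.1 = 0
    · have h2 : p.2 ≠ 0 := by
        intro h2; exact hp (Prod.ext h1 h2)
      exact add_pos_of_nonneg_of_pos (normSq_nonneg _) (normSq_pos.mpr h2)
    · exact add_pos_of_pos_of_nonneg (normSq_pos.mpr h1) (normSq_nonneg _)
  have hs : 2 * (p.1 * (starRingEnd ℂ) p.1 + p.2 * (starRingEnd ℂ) p.2) ≠ 0 := by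
    rw [← cast_s]
    exact Complex.ofReal_ne_zero.mpr (ne_of_gt (by linarith))
  have hval : ∀ (i j : Fin 2) (w : ℂ × ℂ), θb i j p w =
      (2 * (p.1 * (starRingEnd ℂ) p.1 + p.2 * (starRingEnd ℂ) p.2))⁻¹ *
        (cA i j w * p.1 + cB i j w * (starRingEnd ℂ) p.1
          + cC i j w * p.2 + cD i j w * (starRingEnd ℂ) p.2) :=
    fun i j w => congrFun (theta_fun_eq i j w) p
  rw [extD, theta_fun_eq i j v, theta_fun_eq i j u,
    fderiv_key _ _ _ _ _ _ hs, fderiv_key _ _ _ _ _ _ hs]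
  simp only [wedge, Fin.sum_univ_two, hval]
  fin_cases i <;> fin_cases j <;>
    simp only [cA, cB, cC, cD, Matrix.of_apply, Matrix.cons_val', Matrix.cons_val_zero, Matrix.cons_val_one,
      Matrix.head_cons, Matrix.empty_val', Matrix.cons_val_fin_one, Matrix.head_fin_const,
      Fin.isValue, Fin.zero_eta, Fin.mk_one] <;>
    field_simp <;>
    ring

end BismutFlatHopf
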